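/- Let A ⊆ 𝒳 be an event with μ_X(A) > 0 and let μ_A be the conditional distribution μ( · | X ∈ A) on 𝒳 × 𝒴. Let Q be a finite nonempty family of queries q : 𝒳 → 𝒜 with 𝒜 a finite type. Suppose α ∈ (0, 1/2), α' ∈ [0, α], and for each q ∈ Q there is a set-valued map C_q : 𝒜 → Finset 𝒴 satisfying 1 − α ≤ P_{μ_A}(Y ∈ C_q(q(X))) ≤ 1 − α'. Then min_{q ∈ Q} H_{μ_A}(Y | q(X)) ≤ min_{q ∈ Q} [ h_b(α) + α·log|𝒴| − (1 − α')·log(1 − α) + (1 − α')·log E_{μ_A}[|C_q(q(X))|] ]. -/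
import Mathlib

open Finset

/-- Binary entropy function (natural log). -/
noncomputable def binEnt (p : ℝ) : ℝ := -(p * Real.log p) - (1 - p) * Real.log (1 - p)

section

variable {𝒳 𝒴 𝒜 : Type*} [Fintype 𝒳] [Fintype 𝒴] [Fintype 𝒜] [DecidableEq 𝒜]

/-- Joint probability `P(q(X) = a, Y = y)` under the pmf `ν` on `𝒳 × 𝒴`. -/
def jointProb (ν : 𝒳 → 𝒴 → ℝ) (q : 𝒳 → 𝒜) (a : 𝒜) (y : 𝒴) : ℝ :=
  ∑ x, if q x = a then ν x y else 0

/-- Marginal probability `P(q(X) = a)` under the pmf `ν` on `𝒳 × 𝒴`. -/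
def queryProb (ν : 𝒳 → 𝒴 → ℝ) (q : 𝒳 → 𝒜) (a : 𝒜) : ℝ :=
  ∑ x, if q x = a then (∑ y, ν x y) else 0

/-- Conditional entropy `H(Y | q(X))` under the pmf `ν` on `𝒳 × 𝒴`. -/
noncomputable def condEntQ (ν : 𝒳 → 𝒴 → ℝ) (q : 𝒳 → 𝒜) : ℝ :=
  -∑ a, ∑ y, jointProb ν q a y * Real.log (jointProb ν q a y / queryProb ν q a)

lemma regroup (ν : 𝒳 → 𝒴 → ℝ) (q : 𝒳 → 𝒜) (g : 𝒜 → 𝒴 → ℝ) :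
    ∑ a, ∑ y, jointProb ν q a y * g a y = ∑ x, ∑ y, ν x y * g (q x) y := by
  unfold jointProb
  simp only [Finset.sum_mul, ite_mul, zero_mul]
  calc ∑ a, ∑ y, ∑ x, (if q x = a then ν x y * g a y else 0)
      = ∑ a, ∑ x, ∑ y, (if q x = a then ν x y * g a y else 0) :=
        Finset.sum_congr rfl fun a _ => Finset.sum_comm
    _ = ∑ x, ∑ a, ∑ y, (if q x = a then ν x y * g a y else 0) := Finset.sum_comm
    _ = ∑ x, ∑ y, ∑ a, (if q x = a then ν x y * g a y else 0) :=
        Finset.sum_congr rfl fun x _ => Finset.sum_comm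
    _ = ∑ x, ∑ y, ν x y * g (q x) y := by
        refine Finset.sum_congr rfl fun x _ => Finset.sum_congr rfl fun y _ => ?_
        have h : ∀ a, (if q x = a then ν x y * g a y else 0)
            = (if q x = a then ν x y * g (q x) y else 0) := by
          intro a; split_ifs with h <;> simp [h]
        rw [Finset.sum_congr rfl (fun a _ => h a)]
        simp

lemma key [DecidableEq 𝒴] [Nonempty 𝒴]
    (ν : 𝒳 → 𝒴 → ℝ) (hν0 : ∀ x y, 0 ≤ ν x y) (hν1 : ∑ x, ∑ y, ν x y = 1)
    (q : 𝒳 → 𝒜) (Cq : 𝒜 → Finset 𝒴)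
    (α α' : ℝ) (hα0 : 0 < α) (hα2 : α < 1/2) (hα'0 : 0 ≤ α') (hα'α : α' ≤ α)
    (hlo : 1 - α ≤ ∑ x, ∑ y, if y ∈ Cq (q x) then ν x y else 0)
    (hhi : (∑ x, ∑ y, if y ∈ Cq (q x) then ν x y else 0) ≤ 1 - α') :
    condEntQ ν q ≤ binEnt α + α * Real.log (Fintype.card 𝒴)
      - (1 - α') * Real.log (1 - α)
      + (1 - α') * Real.log (∑ x, ∑ y, ν x y * ((Cq (q x)).card : ℝ)) := by
  have hα1 : α < 1 := by linarith
  have hcard : (1:ℝ) ≤ (Fintype.card 𝒴 : ℝ) := by exact_mod_cast Fintype.card_pos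
  have hcard0 : (0:ℝ) < (Fintype.card 𝒴 : ℝ) := by linarith
  set p := jointProb ν q with hp
  set pa := queryProb ν q with hpadef
  set S : ℝ := ∑ x, ∑ y, ν x y * ((Cq (q x)).card : ℝ) with hSdef
  set β : ℝ := ∑ x, ∑ y, (if y ∈ Cq (q x) then ν x y else 0) with hβdef
  have hp0 : ∀ a y, 0 ≤ p a y := by
    intro a y
    refine Finset.sum_nonneg fun x _ => ?_
    split
    · exact hν0 x y
    · exact le_refl 0
  have hpa_eq : ∀ a, pa a = ∑ y, p a y := by
    intro a
    rw [hpadef, hp]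
    unfold queryProb jointProb
    rw [Finset.sum_comm]
    refine Finset.sum_congr rfl fun x _ => ?_
    split_ifs <;> simp
  have hpa0 : ∀ a, 0 ≤ pa a := by
    intro a; rw [hpa_eq]; exact Finset.sum_nonneg fun y _ => hp0 a y
  have hple : ∀ a y, p a y ≤ pa a := by
    intro a y; rw [hpa_eq]
    exact Finset.single_le_sum (fun y _ => hp0 a y) (Finset.mem_univ y)
  have hpsum : ∑ a, ∑ y, p a y = 1 := by
    have h := regroup ν q (fun _ _ => (1:ℝ))
    simpa [hν1] using h
  have hpasum : ∑ a, pa a = 1 := by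
    rw [Finset.sum_congr rfl fun a _ => hpa_eq a]; exact hpsum
  have hβa : ∑ a, ∑ y, (if y ∈ Cq a then p a y else 0) = β := by
    have h := regroup ν q (fun a y => if y ∈ Cq a then (1:ℝ) else 0)
    simp only [mul_ite, mul_one, mul_zero] at h
    rw [hβdef]
    exact h
  have hSa : ∑ a, pa a * ((Cq a).card : ℝ) = S := by
    have h := regroup ν q (fun a _ => ((Cq a).card : ℝ))
    rw [hSdef, ← h]
    refine Finset.sum_congr rfl fun a _ => ?_
    rw [hpa_eq a, Finset.sum_mul]
  have hβS : β ≤ S := by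
    refine Finset.sum_le_sum fun x _ => Finset.sum_le_sum fun y _ => ?_
    by_cases h : y ∈ Cq (q x)
    · simp only [h, if_true]
      have h1 : (1:ℝ) ≤ ((Cq (q x)).card : ℝ) := by
        exact_mod_cast Finset.card_pos.mpr ⟨y, h⟩
      nlinarith [hν0 x y]
    · simp only [h, if_false]
      exact mul_nonneg (hν0 x y) (by positivity)
  have hS0 : (0:ℝ) < S := by linarith
  set s : 𝒜 → 𝒴 → ℝ :=
    fun a y => if y ∈ Cq a then (1 - α)/S else α / (Fintype.card 𝒴 : ℝ) with hsdef
  have hs0 : ∀ a y, 0 < s a y := by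
    intro a y
    rw [hsdef]
    dsimp only
    have h1 : (0:ℝ) < 1 - α := by linarith
    split
    · exact div_pos h1 hS0
    · positivity
  -- Gibbs termwise bound
  have hterm : ∀ a y, -(p a y * Real.log (p a y / pa a))
      ≤ (pa a * s a y - p a y) + p a y * (-Real.log (s a y)) := by
    intro a y
    rcases eq_or_lt_of_le (hp0 a y) with h0 | h0
    · rw [← h0]
      simp only [zero_mul, mul_zero, neg_zero, sub_zero, add_zero, zero_add]
      exact mul_nonneg (hpa0 a) (hs0 a y).le
    · have hpa_pos : 0 < pa a := lt_of_lt_of_le h0 (hple a y)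
      have hspos := hs0 a y
      have hx : 0 < pa a * s a y / p a y := by positivity
      have h3 : p a y * Real.log (pa a * s a y / p a y) ≤ pa a * s a y - p a y := by
        have hls := Real.log_le_sub_one_of_pos hx
        have h4 := mul_le_mul_of_nonneg_left hls h0.le
        have heq : p a y * (pa a * s a y / p a y - 1) = pa a * s a y - p a y := by
          field_simp
        linarith [heq ▸ h4]
      have e1 : Real.log (pa a * s a y / p a y)
          = Real.log (pa a) + Real.log (s a y) - Real.log (p a y) := by
        rw [Real.log_div (by positivity) h0.ne', Real.log_mul hpa_pos.ne' hspos.ne']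
      have e2 : Real.log (p a y / pa a) = Real.log (p a y) - Real.log (pa a) :=
        Real.log_div h0.ne' hpa_pos.ne'
      rw [e1] at h3
      rw [e2]
      nlinarith [h3]
  -- sum of the linear part is ≤ 0
  have hsy : ∀ a, ∑ y, s a y ≤ (1-α)/S * ((Cq a).card : ℝ) + α := by
    intro a
    have h1 : ∀ y, s a y ≤ (if y ∈ Cq a then (1-α)/S else 0) + α / (Fintype.card 𝒴 : ℝ) := by
      intro y
      rw [hsdef]
      dsimp only
      by_cases h : y ∈ Cq a <;> simp only [h, if_true, if_false]
      · have : (0:ℝ) ≤ α / (Fintype.card 𝒴 : ℝ) := by positivity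
        linarith
      · have : (0:ℝ) ≤ α / (Fintype.card 𝒴 : ℝ) := by positivity
        linarith
    calc ∑ y, s a y
        ≤ ∑ y, ((if y ∈ Cq a then (1-α)/S else 0) + α / (Fintype.card 𝒴 : ℝ)) :=
          Finset.sum_le_sum fun y _ => h1 y
      _ = ((Cq a).card : ℝ) * ((1-α)/S) + (Fintype.card 𝒴 : ℝ) * (α / (Fintype.card 𝒴 : ℝ)) := by
          rw [Finset.sum_add_distrib, Finset.sum_const, Finset.sum_ite_mem, Finset.univ_inter,
            Finset.sum_const, nsmul_eq_mul, nsmul_eq_mul, Finset.card_univ]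
      _ = (1-α)/S * ((Cq a).card : ℝ) + α := by
          rw [mul_div_cancel₀ _ (ne_of_gt hcard0)]; ring
  have hsum1 : ∑ a, ∑ y, (pa a * s a y - p a y) ≤ 0 := by
    have step : ∑ a, ∑ y, (pa a * s a y - p a y)
        = ∑ a, pa a * (∑ y, s a y) - 1 := by
      rw [← hpsum, ← Finset.sum_sub_distrib]
      refine Finset.sum_congr rfl fun a _ => ?_
      rw [Finset.mul_sum, ← Finset.sum_sub_distrib]
    rw [step]
    have h5 : ∑ a, pa a * (∑ y, s a y)
        ≤ ∑ a, pa a * ((1-α)/S * ((Cq a).card : ℝ) + α) :=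
      Finset.sum_le_sum fun a _ => mul_le_mul_of_nonneg_left (hsy a) (hpa0 a)
    have h6 : ∑ a, pa a * ((1-α)/S * ((Cq a).card : ℝ) + α)
        = (1-α)/S * S + α := by
      have : ∀ a, pa a * ((1-α)/S * ((Cq a).card : ℝ) + α)
          = (1-α)/S * (pa a * ((Cq a).card : ℝ)) + α * pa a := by
        intro a; ring
      rw [Finset.sum_congr rfl fun a _ => this a, Finset.sum_add_distrib,
        ← Finset.mul_sum, ← Finset.mul_sum, hSa, hpasum, mul_one]
    have h7 : (1-α)/S * S = 1 - α := div_mul_cancel₀ _ hS0.ne'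
    linarith
  -- sum of the entropy part
  have hsum2 : ∑ a, ∑ y, p a y * (-Real.log (s a y))
      = β * (Real.log S - Real.log (1-α))
        + (1 - β) * (Real.log (Fintype.card 𝒴 : ℝ) - Real.log α) := by
    have hterm2 : ∀ a y, p a y * (-Real.log (s a y))
        = (Real.log S - Real.log (1-α)) * (if y ∈ Cq a then p a y else 0)
          + (Real.log (Fintype.card 𝒴 : ℝ) - Real.log α)
              * (p a y - (if y ∈ Cq a then p a y else 0)) := by
      intro a y
      rw [hsdef]
      dsimp only
      by_cases h : y ∈ Cq a <;> simp only [h, if_true, if_false]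
      · rw [Real.log_div (by linarith : (1-α) ≠ 0) hS0.ne']
        ring
      · rw [Real.log_div hα0.ne' hcard0.ne']
        ring
    rw [Finset.sum_congr rfl fun a _ => Finset.sum_congr rfl fun y _ => hterm2 a y]
    simp only [Finset.sum_add_distrib, Finset.sum_sub_distrib, ← Finset.mul_sum]
    rw [hβa, hpsum]
    ring
  -- combine
  have hce : condEntQ ν q = ∑ a, ∑ y, -(p a y * Real.log (p a y / pa a)) := by
    unfold condEntQ
    rw [hp, hpadef]
    simp [Finset.sum_neg_distrib]
  have hmain : condEntQ ν q
      ≤ β * (Real.log S - Real.log (1-α))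
        + (1 - β) * (Real.log (Fintype.card 𝒴 : ℝ) - Real.log α) := by
    rw [hce]
    calc ∑ a, ∑ y, -(p a y * Real.log (p a y / pa a))
        ≤ ∑ a, ∑ y, ((pa a * s a y - p a y) + p a y * (-Real.log (s a y))) :=
          Finset.sum_le_sum fun a _ => Finset.sum_le_sum fun y _ => hterm a y
      _ = (∑ a, ∑ y, (pa a * s a y - p a y)) + ∑ a, ∑ y, p a y * (-Real.log (s a y)) := by
          simp only [Finset.sum_add_distrib]
      _ ≤ 0 + (β * (Real.log S - Real.log (1-α))
          + (1 - β) * (Real.log (Fintype.card 𝒴 : ℝ) - Real.log α)) :=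
          add_le_add hsum1 (le_of_eq hsum2)
      _ = β * (Real.log S - Real.log (1-α))
          + (1 - β) * (Real.log (Fintype.card 𝒴 : ℝ) - Real.log α) := zero_add _
  -- final arithmetic
  have hβlo : 1 - α ≤ β := hlo
  have hβhi : β ≤ 1 - α' := hhi
  have hcs : Real.log (1-α) ≤ Real.log S :=
    Real.log_le_log (by linarith) (by linarith)
  have hcneg : Real.log (1-α) < 0 := Real.log_neg (by linarith) (by linarith)
  have hLpos : 0 ≤ Real.log (Fintype.card 𝒴 : ℝ) := Real.log_nonneg hcard
  have hdneg : Real.log α < 0 := Real.log_neg hα0 hα1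
  have h1 : 0 ≤ (1 - α' - β) * (Real.log S - Real.log (1-α)) :=
    mul_nonneg (by linarith) (by linarith)
  have h2 : 0 ≤ (β - (1-α)) * (Real.log (Fintype.card 𝒴 : ℝ) - Real.log α) :=
    mul_nonneg (by linarith) (by linarith)
  have h3 : 0 ≤ (1-α) * (-Real.log (1-α)) := mul_nonneg (by linarith) (by linarith)
  have hid : (binEnt α + α * Real.log (Fintype.card 𝒴 : ℝ)
        - (1 - α') * Real.log (1-α) + (1 - α') * Real.log S)
      - (β * (Real.log S - Real.log (1-α))
        + (1 - β) * (Real.log (Fintype.card 𝒴 : ℝ) - Real.log α))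
      = (1 - α' - β) * (Real.log S - Real.log (1-α))
        + (β - (1-α)) * (Real.log (Fintype.card 𝒴 : ℝ) - Real.log α)
        + (1-α) * (-Real.log (1-α)) := by
    unfold binEnt; ring
  linarith

end

/-- Let `μ` be a pmf on `𝒳 × 𝒴`, `A ⊆ 𝒳` an event of positive probability
and `μA` the conditional pmf given `X ∈ A`.  If for each query `q` in a finite nonempty
family `Q` there is a set-valued map `C q : 𝒜 → Finset 𝒴` whose coverage under `μA` lies in
`[1 - α, 1 - α']` with `α ∈ (0, 1/2)` and `α' ∈ [0, α]`, then the minimum over `Q` of the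
conditional entropies `H_{μA}(Y | q(X))` is at most the minimum over `Q` of the conformal
upper bounds. -/
theorem min_condEntropy_le_min_conformal_bound
    {𝒳 𝒴 𝒜 : Type*} [Fintype 𝒳] [Fintype 𝒴] [Fintype 𝒜]
    [DecidableEq 𝒜] [DecidableEq 𝒴] [DecidableEq 𝒳]
    [Nonempty 𝒳] [Nonempty 𝒴]
    (μ : 𝒳 → 𝒴 → ℝ)
    (hμ0 : ∀ x y, 0 ≤ μ x y)
    (hμ1 : ∑ x, ∑ y, μ x y = 1)
    (A : Finset 𝒳)
    (hA : 0 < ∑ x ∈ A, ∑ y, μ x y)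
    (μA : 𝒳 → 𝒴 → ℝ)
    (hμA : ∀ x y, μA x y = if x ∈ A then μ x y / (∑ x' ∈ A, ∑ y', μ x' y') else 0)
    (Q : Finset (𝒳 → 𝒜)) (hQ : Q.Nonempty)
    (C : (𝒳 → 𝒜) → 𝒜 → Finset 𝒴)
    (α α' : ℝ) (hα0 : 0 < α) (hα2 : α < 1 / 2)
    (hα'0 : 0 ≤ α') (hα'α : α' ≤ α)
    (hcov_lo : ∀ q ∈ Q, 1 - α ≤ ∑ x, ∑ y, if y ∈ C q (q x) then μA x y else 0)
    (hcov_hi : ∀ q ∈ Q, (∑ x, ∑ y, if y ∈ C q (q x) then μA x y else 0) ≤ 1 - α') :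
    Q.inf' hQ (fun q => condEntQ μA q)
      ≤ Q.inf' hQ (fun q =>
          binEnt α + α * Real.log (Fintype.card 𝒴)
            - (1 - α') * Real.log (1 - α)
            + (1 - α') *
                Real.log (∑ x, ∑ y, μA x y * ((C q (q x)).card : ℝ))) := by
  set Z : ℝ := ∑ x ∈ A, ∑ y, μ x y with hZdef
  have hν0 : ∀ x y, 0 ≤ μA x y := by
    intro x y
    rw [hμA]
    split
    · exact div_nonneg (hμ0 x y) hA.le
    · exact le_refl 0
  have hν1 : ∑ x, ∑ y, μA x y = 1 := by
    have h1 : ∀ x, ∑ y, μA x y = if x ∈ A then (∑ y, μ x y) / Z else 0 := by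
      intro x
      by_cases hx : x ∈ A <;> simp [hμA, hx, ← Finset.sum_div, hZdef]
    rw [Finset.sum_congr rfl fun x _ => h1 x, Finset.sum_ite_mem, Finset.univ_inter,
      ← Finset.sum_div]
    exact div_self hA.ne'
  apply Finset.le_inf'
  intro q hq
  refine le_trans (Finset.inf'_le _ hq) ?_
  exact key μA hν0 hν1 q (C q) α α' hα0 hα2 hα'0 hα'α (hcov_lo q hq) (hcov_hi q hq)
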